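/- The covariance function R_H(s,t) = ½(s^{2H} + t^{2H} − |s−t|^{2H}) of fractional Brownian motion with Hurst parameter H ∈ (0, 1/2] has finite 2-dimensional (1/(2H))-variation on [0,1]². -/

import Mathlib

open Real

private lemma sub_rpow_le {q : ℝ} (hq0 : 0 < q) (hq1 : q ≤ 1) {x y : ℝ} (hx : 0 ≤ x)
    (hxy : x ≤ y) : y ^ q - x ^ q ≤ (y - x) ^ q := by
  have hyx : (0:ℝ) ≤ y - x := sub_nonneg.2 hxy
  have h := NNReal.rpow_add_le_add_rpow x.toNNReal (y - x).toNNReal hq0.le hq1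
  have hxy' : x.toNNReal + (y - x).toNNReal = y.toNNReal := by
    ext
    simp [Real.coe_toNNReal _ hx, Real.coe_toNNReal _ hyx, Real.coe_toNNReal _ (hx.trans hxy)]
  rw [hxy'] at h
  have h2 := (NNReal.coe_le_coe).2 h
  rw [NNReal.coe_rpow, NNReal.coe_add, NNReal.coe_rpow, NNReal.coe_rpow,
    Real.coe_toNNReal _ hx, Real.coe_toNNReal _ hyx, Real.coe_toNNReal _ (hx.trans hxy)] at h2
  linarith

private lemma real_add_rpow_le {p x y : ℝ} (hp : 1 ≤ p) (hx : 0 ≤ x) (hy : 0 ≤ y) :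
    x ^ p + y ^ p ≤ (x + y) ^ p := by
  have h := NNReal.add_rpow_le_rpow_add x.toNNReal y.toNNReal hp
  have h2 := (NNReal.coe_le_coe).2 h
  rw [NNReal.coe_rpow, NNReal.coe_add, NNReal.coe_rpow, NNReal.coe_rpow] at h2
  rw [← Real.toNNReal_add hx hy] at h2
  rw [Real.coe_toNNReal _ hx, Real.coe_toNNReal _ hy, Real.coe_toNNReal _ (by linarith)] at h2
  linarith

private lemma sum_rpow_le_rpow_sum {ι : Type*} (s : Finset ι) {p : ℝ} (hp : 1 ≤ p) (f : ι → ℝ)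
    (hf : ∀ j ∈ s, 0 ≤ f j) : ∑ j ∈ s, f j ^ p ≤ (∑ j ∈ s, f j) ^ p := by
  classical
  induction s using Finset.cons_induction with
  | empty => simp [Real.zero_rpow (by linarith : p ≠ 0)]
  | cons a s ha ih =>
    rw [Finset.sum_cons, Finset.sum_cons]
    have hfa : 0 ≤ f a := hf a (Finset.mem_cons_self a s)
    have hfs : ∀ j ∈ s, 0 ≤ f j := fun j hj => hf j (Finset.mem_cons.2 (Or.inr hj))
    have hsum : 0 ≤ ∑ j ∈ s, f j := Finset.sum_nonneg hfs
    have h1 : f a ^ p + (∑ j ∈ s, f j) ^ p ≤ (f a + ∑ j ∈ s, f j) ^ p :=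
      real_add_rpow_le hp hfa hsum
    have h2 := ih hfs
    linarith

private lemma concave_diff {q : ℝ} (hq0 : 0 < q) (hq1 : q ≤ 1) {s t d : ℝ} (hs : 0 ≤ s)
    (hst : s ≤ t) (hd : 0 ≤ d) : (t + d) ^ q - t ^ q ≤ (s + d) ^ q - s ^ q := by
  rcases eq_or_lt_of_le hst with rfl | hst'
  · exact le_refl _
  have hL : 0 < t + d - s := by linarith
  have conc := Real.concaveOn_rpow hq0.le hq1
  have ht0 : (0:ℝ) ≤ t := hs.trans hst
  have h1 := conc.2 (Set.mem_Ici.2 hs) (Set.mem_Ici.2 (by linarith : (0:ℝ) ≤ t + d))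
      (show (0:ℝ) ≤ d / (t + d - s) from div_nonneg hd hL.le)
      (show (0:ℝ) ≤ (t - s) / (t + d - s) from div_nonneg (by linarith) hL.le)
      (by field_simp; ring)
  have h2 := conc.2 (Set.mem_Ici.2 hs) (Set.mem_Ici.2 (by linarith : (0:ℝ) ≤ t + d))
      (show (0:ℝ) ≤ (t - s) / (t + d - s) from div_nonneg (by linarith) hL.le)
      (show (0:ℝ) ≤ d / (t + d - s) from div_nonneg hd hL.le)
      (by field_simp; ring)
  simp only [smul_eq_mul] at h1 h2
  have e1 : d / (t + d - s) * s + (t - s) / (t + d - s) * (t + d) = t := by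
    field_simp; ring
  have e2 : (t - s) / (t + d - s) * s + d / (t + d - s) * (t + d) = s + d := by
    field_simp; ring
  rw [e1] at h1
  rw [e2] at h2
  have h3 := add_le_add h1 h2
  have e3 : d / (t + d - s) * s ^ q + (t - s) / (t + d - s) * (t + d) ^ q
      + ((t - s) / (t + d - s) * s ^ q + d / (t + d - s) * (t + d) ^ q)
      = s ^ q + (t + d) ^ q := by
    field_simp; ring
  linarith [e3 ▸ h3]

/-- The increment kernel `h(x) = |x-a|^q - |x-a'|^q`. -/
private noncomputable def hf (q a a' x : ℝ) : ℝ := |x - a| ^ q - |x - a'| ^ q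

private lemma abs_rpow_sub_rpow_le {q : ℝ} (hq0 : 0 < q) (hq1 : q ≤ 1) {x y : ℝ} (hx : 0 ≤ x)
    (hy : 0 ≤ y) : |x ^ q - y ^ q| ≤ |x - y| ^ q := by
  rcases le_total x y with h | h
  · rw [abs_sub_comm (x ^ q), abs_sub_comm x y,
      abs_of_nonneg (by linarith : (0:ℝ) ≤ y - x),
      abs_of_nonneg (sub_nonneg.2 (Real.rpow_le_rpow hx h hq0.le))]
    exact sub_rpow_le hq0 hq1 hx h
  · rw [abs_of_nonneg (by linarith : (0:ℝ) ≤ x - y),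
      abs_of_nonneg (sub_nonneg.2 (Real.rpow_le_rpow hy h hq0.le))]
    exact sub_rpow_le hq0 hq1 hy h

private lemma hf_abs_le {q a a' : ℝ} (hq0 : 0 < q) (hq1 : q ≤ 1) (haa : a ≤ a') (x : ℝ) :
    |hf q a a' x| ≤ (a' - a) ^ q := by
  unfold hf
  calc |(|x - a|) ^ q - (|x - a'|) ^ q| ≤ |(|x - a| - |x - a'|)| ^ q :=
        abs_rpow_sub_rpow_le hq0 hq1 (abs_nonneg _) (abs_nonneg _)
    _ ≤ (a' - a) ^ q := by
        apply Real.rpow_le_rpow (abs_nonneg _) _ hq0.le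
        calc |(|x - a| - |x - a'|)| ≤ |(x - a) - (x - a')| := abs_abs_sub_abs_le_abs_sub _ _
          _ = a' - a := by rw [show (x - a) - (x - a') = a' - a by ring,
                abs_of_nonneg (by linarith)]

private lemma hf_anti_left {q a a' : ℝ} (hq0 : 0 < q) (hq1 : q ≤ 1) (haa : a ≤ a')
    {x₁ x₂ : ℝ} (h12 : x₁ ≤ x₂) (h2 : x₂ ≤ a) : hf q a a' x₂ ≤ hf q a a' x₁ := by
  unfold hf
  rw [abs_of_nonpos (by linarith : x₂ - a ≤ 0), abs_of_nonpos (by linarith : x₂ - a' ≤ 0),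
    abs_of_nonpos (by linarith : x₁ - a ≤ 0), abs_of_nonpos (by linarith : x₁ - a' ≤ 0)]
  have h := concave_diff hq0 hq1 (by linarith : (0:ℝ) ≤ a - x₂)
    (by linarith : a - x₂ ≤ a - x₁) (by linarith : (0:ℝ) ≤ a' - a)
  have e1 : a - x₁ + (a' - a) = a' - x₁ := by ring
  have e2 : a - x₂ + (a' - a) = a' - x₂ := by ring
  rw [e1, e2] at h
  have e3 : -(x₂ - a) = a - x₂ := by ring
  have e4 : -(x₂ - a') = a' - x₂ := by ring
  have e5 : -(x₁ - a) = a - x₁ := by ring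
  have e6 : -(x₁ - a') = a' - x₁ := by ring
  rw [e3, e4, e5, e6]
  linarith

private lemma hf_anti_right {q a a' : ℝ} (hq0 : 0 < q) (hq1 : q ≤ 1) (haa : a ≤ a')
    {x₁ x₂ : ℝ} (h1 : a' ≤ x₁) (h12 : x₁ ≤ x₂) : hf q a a' x₂ ≤ hf q a a' x₁ := by
  unfold hf
  rw [abs_of_nonneg (by linarith : (0:ℝ) ≤ x₂ - a), abs_of_nonneg (by linarith : (0:ℝ) ≤ x₂ - a'),
    abs_of_nonneg (by linarith : (0:ℝ) ≤ x₁ - a), abs_of_nonneg (by linarith : (0:ℝ) ≤ x₁ - a')]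
  have h := concave_diff hq0 hq1 (by linarith : (0:ℝ) ≤ x₁ - a')
    (by linarith : x₁ - a' ≤ x₂ - a') (by linarith : (0:ℝ) ≤ a' - a)
  have e1 : x₁ - a' + (a' - a) = x₁ - a := by ring
  have e2 : x₂ - a' + (a' - a) = x₂ - a := by ring
  rw [e1, e2] at h
  linarith

private lemma hf_mono_mid {q a a' : ℝ} (hq0 : 0 < q)
    {x₁ x₂ : ℝ} (h1 : a ≤ x₁) (h12 : x₁ ≤ x₂) (h2 : x₂ ≤ a') : hf q a a' x₁ ≤ hf q a a' x₂ := by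
  unfold hf
  rw [abs_of_nonneg (by linarith : (0:ℝ) ≤ x₂ - a), abs_of_nonpos (by linarith : x₂ - a' ≤ 0),
    abs_of_nonneg (by linarith : (0:ℝ) ≤ x₁ - a), abs_of_nonpos (by linarith : x₁ - a' ≤ 0)]
  have e4 : -(x₂ - a') = a' - x₂ := by ring
  have e6 : -(x₁ - a') = a' - x₁ := by ring
  rw [e4, e6]
  have h1' : (x₁ - a) ^ q ≤ (x₂ - a) ^ q :=
    Real.rpow_le_rpow (by linarith) (by linarith) hq0.le
  have h2' : (a' - x₂) ^ q ≤ (a' - x₁) ^ q :=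
    Real.rpow_le_rpow (by linarith) (by linarith) hq0.le
  linarith

private lemma hf_identity {q a a' : ℝ} (haa : a ≤ a') (x : ℝ) :
    hf q a a' x = hf q a a' (min x a) + hf q a a' (min (max x a) a') + hf q a a' (max x a')
      - hf q a a' a - hf q a a' a' := by
  rcases le_total x a with h | h
  · rw [min_eq_left h, max_eq_right h, min_eq_left haa, max_eq_right (h.trans haa)]
    ring
  · rcases le_total x a' with h' | h'
    · rw [min_eq_right h, max_eq_left h, min_eq_left h', max_eq_right h']
      ring
    · rw [min_eq_right h, max_eq_left h, min_eq_right h', max_eq_left h']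
      ring

/-- The variation function of `hf`. -/
private noncomputable def Vf (q a a' x : ℝ) : ℝ :=
  - hf q a a' (min x a) + hf q a a' (min (max x a) a') - hf q a a' (max x a')

private lemma Vf_abs_le {q a a' : ℝ} (hq0 : 0 < q) (hq1 : q ≤ 1) (haa : a ≤ a') (x : ℝ) :
    |Vf q a a' x| ≤ 3 * (a' - a) ^ q := by
  unfold Vf
  have h1 := hf_abs_le hq0 hq1 haa (min x a)
  have h2 := hf_abs_le hq0 hq1 haa (min (max x a) a')
  have h3 := hf_abs_le hq0 hq1 haa (max x a')
  calc |- hf q a a' (min x a) + hf q a a' (min (max x a) a') - hf q a a' (max x a')|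
      ≤ |- hf q a a' (min x a) + hf q a a' (min (max x a) a')| + |hf q a a' (max x a')| :=
        abs_sub _ _
    _ ≤ |- hf q a a' (min x a)| + |hf q a a' (min (max x a) a')| + |hf q a a' (max x a')| := by
        have := abs_add_le (- hf q a a' (min x a)) (hf q a a' (min (max x a) a'))
        linarith
    _ ≤ 3 * (a' - a) ^ q := by
        rw [abs_neg]
        linarith

private lemma abs_hf_le_Vf {q a a' : ℝ} (hq0 : 0 < q) (hq1 : q ≤ 1) (haa : a ≤ a')
    {x y : ℝ} (hxy : x ≤ y) :
    |hf q a a' y - hf q a a' x| ≤ Vf q a a' y - Vf q a a' x := by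
  have d1 : hf q a a' (min y a) ≤ hf q a a' (min x a) :=
    hf_anti_left hq0 hq1 haa (min_le_min hxy le_rfl) (min_le_right y a)
  have d2 : hf q a a' (min (max x a) a') ≤ hf q a a' (min (max y a) a') := by
    apply hf_mono_mid hq0 (le_min (le_max_right x a) haa)
      (min_le_min (max_le_max hxy le_rfl) le_rfl) (min_le_right _ _)
  have d3 : hf q a a' (max y a') ≤ hf q a a' (max x a') :=
    hf_anti_right hq0 hq1 haa (le_max_right x a') (max_le_max hxy le_rfl)
  have idx := hf_identity (q := q) haa x
  have idy := hf_identity (q := q) haa y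
  have hdecomp : hf q a a' y - hf q a a' x
      = (hf q a a' (min y a) - hf q a a' (min x a))
        + (hf q a a' (min (max y a) a') - hf q a a' (min (max x a) a'))
        + (hf q a a' (max y a') - hf q a a' (max x a')) := by
    rw [idx, idy]; ring
  rw [hdecomp]
  unfold Vf
  rw [abs_le]
  constructor <;> [skip; skip] <;> · linarith

private lemma fin_telescope {m : ℕ} (g : Fin (m + 1) → ℝ) :
    ∑ j : Fin m, (g j.succ - g j.castSucc) = g (Fin.last m) - g 0 := by
  induction m with
  | zero => simp
  | succ n ih =>
    rw [Fin.sum_univ_castSucc]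
    have e : ∀ j : Fin n, g (j.castSucc).succ - g (j.castSucc).castSucc
        = (g ∘ Fin.castSucc) j.succ - (g ∘ Fin.castSucc) j.castSucc := by
      intro j
      simp [Fin.succ_castSucc, -Fin.castSucc_succ]
    rw [Finset.sum_congr rfl (fun j _ => e j), ih (g ∘ Fin.castSucc)]
    simp [Fin.succ_last]

private lemma row_sum {q a a' : ℝ} (hq0 : 0 < q) (hq1 : q ≤ 1) (haa : a ≤ a') {m : ℕ}
    (u : Fin (m + 1) → ℝ) (hu : Monotone u) :
    ∑ j : Fin m, |hf q a a' (u j.succ) - hf q a a' (u j.castSucc)| ≤ 6 * (a' - a) ^ q := by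
  have step : ∀ j : Fin m,
      |hf q a a' (u j.succ) - hf q a a' (u j.castSucc)|
        ≤ Vf q a a' (u j.succ) - Vf q a a' (u j.castSucc) := by
    intro j
    exact abs_hf_le_Vf hq0 hq1 haa (hu (Fin.castSucc_le_succ j))
  calc ∑ j : Fin m, |hf q a a' (u j.succ) - hf q a a' (u j.castSucc)|
      ≤ ∑ j : Fin m, (Vf q a a' (u j.succ) - Vf q a a' (u j.castSucc)) :=
        Finset.sum_le_sum (fun j _ => step j)
    _ = Vf q a a' (u (Fin.last m)) - Vf q a a' (u 0) := fin_telescope (fun j => Vf q a a' (u j))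
    _ ≤ 6 * (a' - a) ^ q := by
        have h1 := Vf_abs_le hq0 hq1 haa (u (Fin.last m))
        have h2 := Vf_abs_le hq0 hq1 haa (u 0)
        have h1' := abs_le.1 h1
        have h2' := abs_le.1 h2
        linarith [h1'.2, h2'.1]

/-- The covariance `R_H(s,t) = (s^{2H} + t^{2H} - |s-t|^{2H})/2` of fractional Brownian
motion with Hurst parameter `H ∈ (0, 1/2]` has finite 2-dimensional `1/(2H)`-variation
on `[0,1]²`. -/
theorem fbm_covariance_finite_variation (H : ℝ) (hH0 : 0 < H) (hH : H ≤ 1 / 2) :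
    ∃ C : ℝ, ∀ (n m : ℕ) (t : Fin (n + 1) → ℝ) (u : Fin (m + 1) → ℝ),
      Monotone t → t 0 = 0 → t (Fin.last n) = 1 →
      Monotone u → u 0 = 0 → u (Fin.last m) = 1 →
      (let R : ℝ → ℝ → ℝ := fun s t => (s ^ (2 * H) + t ^ (2 * H) - |s - t| ^ (2 * H)) / 2
       ∑ i : Fin n, ∑ j : Fin m,
        |R (t i.succ) (u j.succ) - R (t i.succ) (u j.castSucc)
          - R (t i.castSucc) (u j.succ) + R (t i.castSucc) (u j.castSucc)|
            ^ (1 / (2 * H))) ≤ C := by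
  set q : ℝ := 2 * H with hq
  set p : ℝ := 1 / (2 * H) with hp
  have hq0 : 0 < q := by positivity
  have hq1 : q ≤ 1 := by rw [hq]; linarith
  have hp1 : 1 ≤ p := by
    rw [hp]
    rw [le_div_iff₀ (by positivity : (0:ℝ) < 2 * H)]
    linarith
  refine ⟨3 ^ p, ?_⟩
  intro n m t u ht ht0 ht1 hu hu0 hu1
  dsimp only
  -- rewrite each rectangular increment via hf
  have key : ∀ (i : Fin n) (j : Fin m),
      ((t i.succ) ^ q + (u j.succ) ^ q - |t i.succ - u j.succ| ^ q) / 2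
        - ((t i.succ) ^ q + (u j.castSucc) ^ q - |t i.succ - u j.castSucc| ^ q) / 2
        - ((t i.castSucc) ^ q + (u j.succ) ^ q - |t i.castSucc - u j.succ| ^ q) / 2
        + ((t i.castSucc) ^ q + (u j.castSucc) ^ q - |t i.castSucc - u j.castSucc| ^ q) / 2
      = (hf q (t i.castSucc) (t i.succ) (u j.succ)
          - hf q (t i.castSucc) (t i.succ) (u j.castSucc)) / 2 := by
    intro i j
    unfold hf
    rw [abs_sub_comm (t i.succ) (u j.succ), abs_sub_comm (t i.succ) (u j.castSucc),
      abs_sub_comm (t i.castSucc) (u j.succ), abs_sub_comm (t i.castSucc) (u j.castSucc)]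
    ring
  have hrow : ∀ i : Fin n,
      ∑ j : Fin m,
        |((t i.succ) ^ q + (u j.succ) ^ q - |t i.succ - u j.succ| ^ q) / 2
          - ((t i.succ) ^ q + (u j.castSucc) ^ q - |t i.succ - u j.castSucc| ^ q) / 2
          - ((t i.castSucc) ^ q + (u j.succ) ^ q - |t i.castSucc - u j.succ| ^ q) / 2
          + ((t i.castSucc) ^ q + (u j.castSucc) ^ q - |t i.castSucc - u j.castSucc| ^ q) / 2|
        ≤ 3 * (t i.succ - t i.castSucc) ^ q := by
    intro i
    have hti : t i.castSucc ≤ t i.succ := ht (Fin.castSucc_le_succ i)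
    calc ∑ j : Fin m, |((t i.succ) ^ q + (u j.succ) ^ q - |t i.succ - u j.succ| ^ q) / 2
          - ((t i.succ) ^ q + (u j.castSucc) ^ q - |t i.succ - u j.castSucc| ^ q) / 2
          - ((t i.castSucc) ^ q + (u j.succ) ^ q - |t i.castSucc - u j.succ| ^ q) / 2
          + ((t i.castSucc) ^ q + (u j.castSucc) ^ q - |t i.castSucc - u j.castSucc| ^ q) / 2|
        = ∑ j : Fin m, |hf q (t i.castSucc) (t i.succ) (u j.succ)
            - hf q (t i.castSucc) (t i.succ) (u j.castSucc)| / 2 := by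
          apply Finset.sum_congr rfl
          intro j _
          rw [key i j, abs_div, abs_of_nonneg (by norm_num : (0:ℝ) ≤ 2)]
      _ = (∑ j : Fin m, |hf q (t i.castSucc) (t i.succ) (u j.succ)
            - hf q (t i.castSucc) (t i.succ) (u j.castSucc)|) / 2 := by
          rw [Finset.sum_div]
      _ ≤ 6 * (t i.succ - t i.castSucc) ^ q / 2 := by
          have := row_sum hq0 hq1 hti u hu
          linarith
      _ = 3 * (t i.succ - t i.castSucc) ^ q := by ring
  have main : ∀ i : Fin n,
      ∑ j : Fin m,
        |((t i.succ) ^ q + (u j.succ) ^ q - |t i.succ - u j.succ| ^ q) / 2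
          - ((t i.succ) ^ q + (u j.castSucc) ^ q - |t i.succ - u j.castSucc| ^ q) / 2
          - ((t i.castSucc) ^ q + (u j.succ) ^ q - |t i.castSucc - u j.succ| ^ q) / 2
          + ((t i.castSucc) ^ q + (u j.castSucc) ^ q - |t i.castSucc - u j.castSucc| ^ q) / 2|
          ^ p
      ≤ 3 ^ p * (t i.succ - t i.castSucc) := by
    intro i
    have hti : t i.castSucc ≤ t i.succ := ht (Fin.castSucc_le_succ i)
    have hti' : (0:ℝ) ≤ t i.succ - t i.castSucc := by linarith
    calc ∑ j : Fin m,
        |((t i.succ) ^ q + (u j.succ) ^ q - |t i.succ - u j.succ| ^ q) / 2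
          - ((t i.succ) ^ q + (u j.castSucc) ^ q - |t i.succ - u j.castSucc| ^ q) / 2
          - ((t i.castSucc) ^ q + (u j.succ) ^ q - |t i.castSucc - u j.succ| ^ q) / 2
          + ((t i.castSucc) ^ q + (u j.castSucc) ^ q - |t i.castSucc - u j.castSucc| ^ q) / 2|
          ^ p
        ≤ (∑ j : Fin m,
          |((t i.succ) ^ q + (u j.succ) ^ q - |t i.succ - u j.succ| ^ q) / 2
          - ((t i.succ) ^ q + (u j.castSucc) ^ q - |t i.succ - u j.castSucc| ^ q) / 2
          - ((t i.castSucc) ^ q + (u j.succ) ^ q - |t i.castSucc - u j.succ| ^ q) / 2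
          + ((t i.castSucc) ^ q + (u j.castSucc) ^ q - |t i.castSucc - u j.castSucc| ^ q) / 2|)
          ^ p :=
          sum_rpow_le_rpow_sum _ hp1 _ (fun j _ => abs_nonneg _)
      _ ≤ (3 * (t i.succ - t i.castSucc) ^ q) ^ p := by
          apply Real.rpow_le_rpow (Finset.sum_nonneg (fun j _ => abs_nonneg _)) (hrow i) (by linarith)
      _ = 3 ^ p * (t i.succ - t i.castSucc) := by
          rw [Real.mul_rpow (by norm_num) (Real.rpow_nonneg hti' q),
            ← Real.rpow_mul hti', show q * p = 1 by rw [hq, hp]; field_simp,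
            Real.rpow_one]
  calc ∑ i : Fin n, ∑ j : Fin m,
        |((t i.succ) ^ q + (u j.succ) ^ q - |t i.succ - u j.succ| ^ q) / 2
          - ((t i.succ) ^ q + (u j.castSucc) ^ q - |t i.succ - u j.castSucc| ^ q) / 2
          - ((t i.castSucc) ^ q + (u j.succ) ^ q - |t i.castSucc - u j.succ| ^ q) / 2
          + ((t i.castSucc) ^ q + (u j.castSucc) ^ q - |t i.castSucc - u j.castSucc| ^ q) / 2|
          ^ p
      ≤ ∑ i : Fin n, 3 ^ p * (t i.succ - t i.castSucc) :=
        Finset.sum_le_sum (fun i _ => main i)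
    _ = 3 ^ p * ∑ i : Fin n, (t i.succ - t i.castSucc) := by rw [Finset.mul_sum]
    _ = 3 ^ p := by
        rw [fin_telescope t, ht1, ht0]
        ring
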